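/- For all natural numbers m, n, N with 1 ≤ m < n ≤ N − 1, one has (−1)^m · ((m+1)(n−m)_m (N−n)_m)/(m! (N)_{m+1}) · ∑_{k=0}^m [(−m)_k (n+1)_k (1−N+n)_k]/[(n−m)_k (1−N−m+n)_k k!] = ((m+1)²/N) · ∑_{k=0}^m [(−m)_k (n+1)_k (m+2)_k]/[(2)_k (N+1)_k k!] (as an identity of rational numbers). -/

import Mathlib

/-- The Pochhammer symbol `(a)_k = a (a+1) ⋯ (a+k-1)` over ℚ. -/
noncomputable def poch (a : ℚ) (k : ℕ) : ℚ := (ascPochhammer ℚ k).eval a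

lemma poch_zero (a : ℚ) : poch a 0 = 1 := by simp [poch]

lemma poch_succ (a : ℚ) (k : ℕ) : poch a (k+1) = poch a k * (a + k) := by
  simp [poch, ascPochhammer_succ_eval]

lemma poch_succ_left (a : ℚ) (k : ℕ) : poch a (k+1) = a * poch (a+1) k := by
  simp [poch, ascPochhammer_succ_left, Polynomial.eval_comp]

lemma poch_add (a : ℚ) (j i : ℕ) : poch a (j+i) = poch a j * poch (a+j) i := by
  simp only [poch, ← ascPochhammer_mul, Polynomial.eval_mul, Polynomial.eval_comp,
    Polynomial.eval_add, Polynomial.eval_X, Polynomial.eval_natCast]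

lemma poch_congr {a a' : ℚ} (h : a = a') (k : ℕ) : poch a k = poch a' k := by rw [h]

lemma poch_ne_zero {a : ℚ} {k : ℕ} (h : ∀ t : ℕ, t < k → a + t ≠ 0) : poch a k ≠ 0 := by
  induction k with
  | zero => simp [poch_zero]
  | succ k ih =>
    rw [poch_succ]
    exact mul_ne_zero (ih fun t ht => h t (by omega)) (h k (by omega))

lemma poch_neg_nat (m : ℕ) : ∀ j : ℕ, j ≤ m →
    poch (-(m:ℚ)) j = (-1)^j * (j.factorial : ℚ) * (m.choose j : ℚ) := by
  intro j
  induction j with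
  | zero => simp [poch_zero]
  | succ j ih =>
    intro hj
    rw [poch_succ, ih (by omega)]
    have h2 : (m.choose (j+1) : ℚ) * (j+1) = (m.choose j : ℚ) * ((m : ℚ) - j) := by
      have := Nat.choose_succ_right_eq m j
      have hc : ((m.choose (j+1) * (j+1) : ℕ) : ℚ) = ((m.choose j * (m - j) : ℕ) : ℚ) := by
        exact_mod_cast congrArg (Nat.cast (R := ℚ)) this
      push_cast [Nat.cast_sub (by omega : j ≤ m)] at hc
      exact_mod_cast hc
    have hf : ((j+1).factorial : ℚ) = (j.factorial : ℚ) * (j+1) := by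
      push_cast [Nat.factorial_succ]; ring
    rw [hf]
    have : (-(m:ℚ) + j) = -((m:ℚ) - j) := by ring
    rw [this, pow_succ]
    linear_combination ((-1:ℚ)^j * (j.factorial:ℚ)) * h2

lemma poch_reflect (x : ℚ) : ∀ p : ℕ, poch x p = (-1)^p * poch (1 - x - p) p := by
  intro p
  induction p with
  | zero => simp [poch_zero]
  | succ p ih =>
    rw [poch_succ, ih]
    rw [show (1 - x - (((p+1):ℕ):ℚ)) = (1 - x - p) - 1 by push_cast; ring]
    rw [poch_succ_left ((1-x-(p:ℚ))-1) p]
    rw [poch_congr (show (1-x-(p:ℚ)-1+1) = (1-x-(p:ℚ)) by ring) p]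
    ring

lemma poch_two (k : ℕ) : poch 2 k = ((k+1).factorial : ℚ) := by
  induction k with
  | zero => simp [poch_zero]
  | succ k ih =>
    rw [poch_succ, ih, Nat.factorial_succ (k+1)]
    push_cast
    ring

lemma vdm : ∀ (k : ℕ) (b c : ℚ),
    ∑ j ∈ Finset.range (k+1), (-1:ℚ)^j * (k.choose j : ℚ) * poch b j * poch (c+j) (k-j)
      = poch (c-b) k := by
  intro k
  induction k with
  | zero => intro b c; simp [poch_zero]
  | succ k ih =>
    intro b c
    rw [Finset.sum_range_succ']
    have hsplit : ∀ i ∈ Finset.range (k+1),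
        (-1:ℚ)^(i+1) * ((k+1).choose (i+1) : ℚ) * poch b (i+1) * poch (c+(((i+1):ℕ):ℚ)) (k+1-(i+1))
        = (-(b * ((-1:ℚ)^i * (k.choose i : ℚ) * poch (b+1) i * poch ((c+1)+i) (k-i))))
          + (-1:ℚ)^(i+1) * (k.choose (i+1) : ℚ) * poch b (i+1) * poch (c+(((i+1):ℕ):ℚ)) (k-i) := by
      intro i hi
      rw [Nat.choose_succ_succ k i]
      rw [poch_succ_left b i]
      rw [show (c+(((i+1):ℕ):ℚ)) = ((c+1)+i) by push_cast; ring]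
      rw [show k+1-(i+1) = k-i by omega]
      push_cast
      ring
    rw [Finset.sum_congr rfl hsplit, Finset.sum_add_distrib]
    have h1 : ∑ i ∈ Finset.range (k+1),
        (-(b * ((-1:ℚ)^i * (k.choose i : ℚ) * poch (b+1) i * poch ((c+1)+i) (k-i))))
        = -(b * poch (c-b) k) := by
      rw [Finset.sum_neg_distrib, ← Finset.mul_sum, ih (b+1) (c+1)]
      rw [show (c+1-(b+1)) = (c-b) by ring]
    rw [h1]
    have h2 : ∀ i ∈ Finset.range (k+1),
        (-1:ℚ)^(i+1) * (k.choose (i+1) : ℚ) * poch b (i+1) * poch (c+(((i+1):ℕ):ℚ)) (k-i)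
        = (c+(k:ℚ)) * ((-1:ℚ)^(i+1) * (k.choose (i+1):ℚ) * poch b (i+1) *
            poch (c+(((i+1):ℕ):ℚ)) (k-(i+1))) := by
      intro i hi
      simp only [Finset.mem_range] at hi
      by_cases h : i < k
      · rw [show k-i = (k-(i+1))+1 by omega, poch_succ (c+(((i+1):ℕ):ℚ)) (k-(i+1))]
        rw [show (c + (((i+1):ℕ):ℚ) + (((k-(i+1)):ℕ):ℚ)) = c + (k:ℚ) by
          push_cast [Nat.cast_sub (by omega : i+1 ≤ k)]; ring]
        ring
      · have hik : i = k := by omega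
        subst hik
        simp [Nat.choose_succ_self]
    rw [Finset.sum_congr rfl h2, ← Finset.mul_sum]
    have h3 := Finset.sum_range_succ'
      (fun j => (-1:ℚ)^j * (k.choose j : ℚ) * poch b j * poch (c+(j:ℚ)) (k-j)) (k+1)
    rw [Finset.sum_range_succ] at h3
    rw [ih b c] at h3
    simp only [Nat.choose_succ_self, Nat.cast_zero, mul_zero, zero_mul, add_zero, pow_zero,
      Nat.choose_zero_right, Nat.cast_one, one_mul, poch_zero, mul_one, Nat.sub_zero] at h3
    have hgoal1 : poch c (k+1) = poch c k * (c+k) := poch_succ c k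
    have hgoal2 : poch (c-b) (k+1) = poch (c-b) k * ((c-b)+k) := poch_succ (c-b) k
    simp only [pow_zero, Nat.choose_zero_right, Nat.cast_one, poch_zero, Nat.cast_zero,
      add_zero, one_mul, mul_one, Nat.sub_zero]
    rw [hgoal1, hgoal2]
    linear_combination (-(c+(k:ℚ))) * h3

lemma vf (p : ℕ) (B D : ℚ) (hD : ∀ t : ℕ, t < p → D + t ≠ 0) :
    ∑ i ∈ Finset.range (p+1), poch (-(p:ℚ)) i * poch B i / (poch D i * (i.factorial:ℚ))
      = poch (D - B) p / poch D p := by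
  have hterm : ∀ i ∈ Finset.range (p+1),
      poch (-(p:ℚ)) i * poch B i / (poch D i * (i.factorial:ℚ))
      = ((-1:ℚ)^i * (p.choose i : ℚ) * poch B i * poch (D+(i:ℚ)) (p-i)) / poch D p := by
    intro i hi
    simp only [Finset.mem_range] at hi
    have hip : i ≤ p := by omega
    rw [poch_neg_nat p i hip]
    have hsplit : poch D p = poch D i * poch (D+(i:ℚ)) (p-i) := by
      have h := poch_add D i (p-i)
      rw [show i + (p-i) = p by omega] at h
      exact h
    have h1 : poch D i ≠ 0 := poch_ne_zero (fun t ht => hD t (by omega))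
    have h2 : poch (D+(i:ℚ)) (p-i) ≠ 0 := by
      apply poch_ne_zero
      intro t ht
      have h := hD (i+t) (by omega)
      rwa [show D + ((i+t:ℕ):ℚ) = (D + (i:ℚ)) + t by push_cast; ring] at h
    have h3 : (i.factorial : ℚ) ≠ 0 := Nat.cast_ne_zero.mpr (Nat.factorial_ne_zero i)
    rw [hsplit]
    field_simp
  rw [Finset.sum_congr rfl hterm, ← Finset.sum_div, vdm p B D]

lemma middle (m : ℕ) (a b c d : ℚ) (hc : ∀ t : ℕ, t < m → c + t ≠ 0)
    (hd : ∀ t : ℕ, t < m → d + t ≠ 0) :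
    ∑ k ∈ Finset.range (m+1),
        poch (-(m:ℚ)) k * poch a k * poch b k / (poch c k * poch d k * (k.factorial:ℚ))
      = ∑ j ∈ Finset.range (m+1),
        (-1:ℚ)^j * poch (-(m:ℚ)) j * poch (c-a) j * poch b j * poch (d-b) (m-j)
          / (poch c j * poch d m * (j.factorial:ℚ)) := by
  have step1 : ∀ k ∈ Finset.range (m+1),
      poch (-(m:ℚ)) k * poch a k * poch b k / (poch c k * poch d k * (k.factorial:ℚ))
      = ∑ j ∈ Finset.range (k+1),
          poch (-(m:ℚ)) k * poch b k / (poch d k * (k.factorial:ℚ)) *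
            (poch (-(k:ℚ)) j * poch (c-a) j / (poch c j * (j.factorial:ℚ))) := by
    intro k hk
    simp only [Finset.mem_range] at hk
    have hvf := vf k (c-a) c (fun t ht => hc t (by omega))
    rw [show c - (c-a) = a by ring] at hvf
    rw [← Finset.mul_sum, hvf]
    ring
  rw [Finset.sum_congr rfl step1]
  have hswap := Finset.sum_Ico_Ico_comm 0 (m+1)
    (fun j k => poch (-(m:ℚ)) k * poch b k / (poch d k * (k.factorial:ℚ)) *
      (poch (-(k:ℚ)) j * poch (c-a) j / (poch c j * (j.factorial:ℚ))))
  simp only [Finset.range_eq_Ico]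
  rw [← hswap]
  rw [← Finset.range_eq_Ico]
  apply Finset.sum_congr rfl
  intro j hj
  simp only [Finset.mem_range] at hj
  have hjm : j ≤ m := by omega
  rw [Finset.sum_Ico_eq_sum_range]
  have hrange : m + 1 - j = (m-j) + 1 := by omega
  rw [hrange]
  -- nonzero facts
  have hcj : poch c j ≠ 0 := poch_ne_zero (fun t ht => hc t (by omega))
  have hdj : poch d j ≠ 0 := poch_ne_zero (fun t ht => hd t (by omega))
  have hdshift : ∀ t : ℕ, t < m - j → (d + (j:ℚ)) + t ≠ 0 := by
    intro t ht
    have h := hd (j+t) (by omega)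
    rwa [show d + ((j+t:ℕ):ℚ) = (d + (j:ℚ)) + t by push_cast; ring] at h
  have hdmj : poch (d+(j:ℚ)) (m-j) ≠ 0 := poch_ne_zero hdshift
  have hjfac : (j.factorial : ℚ) ≠ 0 := Nat.cast_ne_zero.mpr (Nat.factorial_ne_zero j)
  have step2 : ∀ i ∈ Finset.range ((m-j)+1),
      poch (-(m:ℚ)) (j+i) * poch b (j+i) / (poch d (j+i) * ((j+i).factorial:ℚ)) *
        (poch (-((j+i:ℕ):ℚ)) j * poch (c-a) j / (poch c j * (j.factorial:ℚ)))
      = ((-1:ℚ)^j * poch (-(m:ℚ)) j * poch (c-a) j * poch b j /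
          (poch c j * poch d j * (j.factorial:ℚ))) *
        (poch (-(((m-j):ℕ)):ℚ) i * poch (b+(j:ℚ)) i / (poch (d+(j:ℚ)) i * (i.factorial:ℚ))) := by
    intro i hi
    simp only [Finset.mem_range] at hi
    have him : j + i ≤ m := by omega
    rw [poch_add (-(m:ℚ)) j i, poch_add b j i, poch_add d j i]
    rw [poch_congr (show -(m:ℚ) + (j:ℚ) = -(((m-j):ℕ):ℚ) by
      push_cast [Nat.cast_sub hjm]; ring) i]
    rw [poch_neg_nat (j+i) j (by omega)]
    have hfac : ((j+i).factorial : ℚ) = ((j+i).choose j : ℚ) * (j.factorial:ℚ) * (i.factorial:ℚ) := by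
      have h := Nat.choose_mul_factorial_mul_factorial (show j ≤ j+i by omega)
      rw [show j + i - j = i by omega] at h
      exact_mod_cast h.symm
    rw [hfac]
    have hch : ((j+i).choose j : ℚ) ≠ 0 :=
      Nat.cast_ne_zero.mpr (Nat.choose_pos (show j ≤ j+i by omega)).ne'
    have hdi : poch (d+(j:ℚ)) i ≠ 0 := poch_ne_zero (fun t ht => hdshift t (by omega))
    have hifac : (i.factorial : ℚ) ≠ 0 := Nat.cast_ne_zero.mpr (Nat.factorial_ne_zero i)
    field_simp
  rw [Finset.sum_congr rfl step2, ← Finset.mul_sum]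
  rw [vf (m-j) (b+(j:ℚ)) (d+(j:ℚ)) hdshift]
  have hdm : poch d m = poch d j * poch (d+(j:ℚ)) (m-j) := by
    have h := poch_add d j (m-j)
    rw [show j + (m-j) = m by omega] at h
    exact h
  rw [hdm, show (d + (j:ℚ)) - (b + (j:ℚ)) = d - b by ring]
  field_simp

set_option maxHeartbeats 2000000 in
theorem shmaliy_hypergeometric_representations (m n N : ℕ)
    (hm : 1 ≤ m) (hmn : m < n) (hnN : n ≤ N - 1) :
    (-1 : ℚ) ^ m *
        (((m : ℚ) + 1) * poch ((n : ℚ) - m) m * poch ((N : ℚ) - n) m) /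
        ((m.factorial : ℚ) * poch (N : ℚ) (m + 1)) *
      ∑ k ∈ Finset.range (m + 1),
        (poch (-(m : ℚ)) k * poch ((n : ℚ) + 1) k * poch (1 - (N : ℚ) + n) k) /
          (poch ((n : ℚ) - m) k * poch (1 - (N : ℚ) - m + n) k * (k.factorial : ℚ)) =
    (((m : ℚ) + 1) ^ 2 / N) *
      ∑ k ∈ Finset.range (m + 1),
        (poch (-(m : ℚ)) k * poch ((n : ℚ) + 1) k * poch ((m : ℚ) + 2) k) /
          (poch 2 k * poch ((N : ℚ) + 1) k * (k.factorial : ℚ)) := by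
  have hNn : n + 1 ≤ N := by omega
  have hQmn : (m:ℚ) < (n:ℚ) := by exact_mod_cast hmn
  have hQnN : (n:ℚ) + 1 ≤ (N:ℚ) := by exact_mod_cast hNn
  -- hypotheses for middle
  have hcL : ∀ t : ℕ, t < m → ((n:ℚ) - m) + t ≠ 0 := by
    intro t ht
    have : (0:ℚ) ≤ t := Nat.cast_nonneg t
    nlinarith
  have hdL : ∀ t : ℕ, t < m → (1 - (N:ℚ) - m + n) + t ≠ 0 := by
    intro t ht
    have h1 : (t:ℚ) ≤ (m:ℚ) - 1 := by
      have : (t:ℚ) + 1 ≤ (m:ℚ) := by exact_mod_cast Nat.succ_le_of_lt ht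
      linarith
    intro hcon
    nlinarith
  have hcR : ∀ t : ℕ, t < m → ((N:ℚ) + 1) + t ≠ 0 := by
    intro t ht
    have h0 : (0:ℚ) ≤ t := Nat.cast_nonneg t
    have h1 : (0:ℚ) ≤ N := Nat.cast_nonneg N
    nlinarith
  have hdR : ∀ t : ℕ, t < m → (2:ℚ) + t ≠ 0 := by
    intro t ht
    have h0 : (0:ℚ) ≤ t := Nat.cast_nonneg t
    nlinarith
  have hLmid := middle m (1 - (N:ℚ) + n) ((n:ℚ) + 1) ((n:ℚ) - m) (1 - (N:ℚ) - m + n) hcL hdL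
  have hRmid := middle m ((m:ℚ) + 2) ((n:ℚ) + 1) ((N:ℚ) + 1) 2 hcR hdR
  have hL : (∑ k ∈ Finset.range (m + 1),
        (poch (-(m : ℚ)) k * poch ((n : ℚ) + 1) k * poch (1 - (N : ℚ) + n) k) /
          (poch ((n : ℚ) - m) k * poch (1 - (N : ℚ) - m + n) k * (k.factorial : ℚ)))
      = ∑ k ∈ Finset.range (m+1),
        poch (-(m:ℚ)) k * poch (1 - (N:ℚ) + n) k * poch ((n:ℚ) + 1) k /
          (poch ((n:ℚ) - m) k * poch (1 - (N:ℚ) - m + n) k * (k.factorial:ℚ)) :=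
    Finset.sum_congr rfl (fun k _ => by ring)
  have hR : (∑ k ∈ Finset.range (m + 1),
        (poch (-(m : ℚ)) k * poch ((n : ℚ) + 1) k * poch ((m : ℚ) + 2) k) /
          (poch 2 k * poch ((N : ℚ) + 1) k * (k.factorial : ℚ)))
      = ∑ k ∈ Finset.range (m+1),
        poch (-(m:ℚ)) k * poch ((m:ℚ) + 2) k * poch ((n:ℚ) + 1) k /
          (poch ((N:ℚ) + 1) k * poch 2 k * (k.factorial:ℚ)) :=
    Finset.sum_congr rfl (fun k _ => by ring)
  rw [hL, hLmid, hR, hRmid, Finset.mul_sum, Finset.mul_sum]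
  refine Finset.sum_congr rfl ?_
  intro j hj
  simp only [Finset.mem_range] at hj
  have hjm : j ≤ m := by omega
  -- sign lemma
  have hsgn : (-1:ℚ)^(m-j) = (-1:ℚ)^m * (-1:ℚ)^j := by
    have h1 : (-1:ℚ)^(m-j) * (-1:ℚ)^j = (-1:ℚ)^m := by
      rw [← pow_add]; congr 1; omega
    rw [← h1, mul_assoc, ← mul_pow]; norm_num
  -- reflections
  have e2 : poch (1 - (N:ℚ) - m + n - ((n:ℚ) + 1)) (m-j)
      = (-1:ℚ)^(m-j) * poch ((N:ℚ) + 1 + j) (m-j) := by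
    have h := poch_reflect ((N:ℚ) + 1 + j) (m-j)
    rw [poch_congr (show (1:ℚ) - ((N:ℚ) + 1 + j) - ((m-j:ℕ):ℚ)
        = 1 - (N:ℚ) - m + n - ((n:ℚ) + 1) by push_cast [Nat.cast_sub hjm]; ring) (m-j)] at h
    rw [h, ← mul_assoc, ← mul_pow]; norm_num
  have e4 : poch (2 - ((n:ℚ) + 1)) (m-j)
      = (-1:ℚ)^(m-j) * poch ((n:ℚ) - m + j) (m-j) := by
    have h := poch_reflect ((n:ℚ) - m + j) (m-j)
    rw [poch_congr (show (1:ℚ) - ((n:ℚ) - m + j) - ((m-j:ℕ):ℚ)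
        = 2 - ((n:ℚ) + 1) by push_cast [Nat.cast_sub hjm]; ring) (m-j)] at h
    rw [h, ← mul_assoc, ← mul_pow]; norm_num
  have e5 : poch (1 - (N:ℚ) - m + n) m = (-1:ℚ)^m * poch ((N:ℚ) - n) m := by
    have h := poch_reflect ((N:ℚ) - n) m
    rw [poch_congr (show (1:ℚ) - ((N:ℚ) - n) - (m:ℚ)
        = 1 - (N:ℚ) - m + n by ring) m] at h
    rw [h, ← mul_assoc, ← mul_pow]; norm_num
  -- splittings
  have s1 : poch ((n:ℚ) - m) m = poch ((n:ℚ) - m) j * poch ((n:ℚ) - m + j) (m-j) := by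
    have h := poch_add ((n:ℚ) - m) j (m-j)
    rw [show j + (m-j) = m by omega] at h
    exact h
  have s2 : poch (N:ℚ) (m+1) = (N:ℚ) * poch ((N:ℚ) + 1) m := poch_succ_left (N:ℚ) m
  have s3 : poch ((N:ℚ) + 1) m = poch ((N:ℚ) + 1) j * poch ((N:ℚ) + 1 + j) (m-j) := by
    have h := poch_add ((N:ℚ) + 1) j (m-j)
    rw [show j + (m-j) = m by omega] at h
    exact h
  have s4 : poch 2 m = ((m:ℚ) + 1) * (m.factorial : ℚ) := by
    rw [poch_two, Nat.factorial_succ]; push_cast; ring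
  -- normalize c - a expressions
  have r1 : poch ((n:ℚ) - m - (1 - (N:ℚ) + n)) j = poch ((N:ℚ) - m - 1) j :=
    poch_congr (by ring) j
  have r2 : poch ((N:ℚ) + 1 - ((m:ℚ) + 2)) j = poch ((N:ℚ) - m - 1) j :=
    poch_congr (by ring) j
  -- nonzero facts
  have z1 : poch ((n:ℚ) - m) j ≠ 0 := poch_ne_zero (fun t ht => by
    have : (0:ℚ) ≤ t := Nat.cast_nonneg t
    nlinarith)
  have z2 : poch ((n:ℚ) - m + j) (m-j) ≠ 0 := poch_ne_zero (fun t ht => by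
    have h0 : (0:ℚ) ≤ t := Nat.cast_nonneg t
    have h1 : (0:ℚ) ≤ j := Nat.cast_nonneg j
    nlinarith)
  have z3 : poch ((N:ℚ) - n) m ≠ 0 := poch_ne_zero (fun t ht => by
    have h0 : (0:ℚ) ≤ t := Nat.cast_nonneg t
    nlinarith)
  have z4 : poch ((N:ℚ) + 1) j ≠ 0 := poch_ne_zero (fun t ht => by
    have h0 : (0:ℚ) ≤ t := Nat.cast_nonneg t
    have h1 : (0:ℚ) ≤ N := Nat.cast_nonneg N
    nlinarith)
  have z5 : poch ((N:ℚ) + 1 + j) (m-j) ≠ 0 := poch_ne_zero (fun t ht => by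
    have h0 : (0:ℚ) ≤ t := Nat.cast_nonneg t
    have h1 : (0:ℚ) ≤ N := Nat.cast_nonneg N
    have h2 : (0:ℚ) ≤ j := Nat.cast_nonneg j
    nlinarith)
  have z6 : (N:ℚ) ≠ 0 := by
    have : (0:ℚ) < (N:ℚ) := by nlinarith [(Nat.cast_nonneg n : (0:ℚ) ≤ n)]
    exact this.ne'
  have z7 : (m.factorial : ℚ) ≠ 0 := Nat.cast_ne_zero.mpr (Nat.factorial_ne_zero m)
  have z8 : (j.factorial : ℚ) ≠ 0 := Nat.cast_ne_zero.mpr (Nat.factorial_ne_zero j)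
  rw [r1, r2, e2, e4, e5, s1, s2, s3, s4, hsgn]
  field_simp
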